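/- Let B be a Z-graded k-algebra and τ = (τ_g)_{g∈Z} a Zhang system on B, i.e. degree-preserving k-linear bijections τ_g : B → B satisfying τ_g(a τ_h(b)) = τ_g(a) τ_{g+h}(b) for homogeneous a ∈ B_h and b ∈ B. Let B_τ denote the Zhang twist: the same graded vector space with multiplication a · b = a τ_g(b) for a ∈ B_g. Then B_τ is an associative Z-graded algebra and the associated Z-algebras are isomorphic: B̌ ≅ (B_τ)̌, where B̌_{ij} = B_{j-i} with multiplication induced from B. -/
import Mathlib

section Aux

variable (k : Type) [CommRing k] (B : Type) [Ring B] [Algebra k B]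
    (𝒜 : ℤ → Submodule k B) [GradedRing 𝒜]

/-- If a linear equivalence maps each graded piece into itself, then so does its inverse. -/
lemma zhang_symm_mem (e : B ≃ₗ[k] B) (hdeg : ∀ (n : ℤ) (b : B), b ∈ 𝒜 n → e b ∈ 𝒜 n)
    (n : ℤ) (b : B) (hb : b ∈ 𝒜 n) : e.symm b ∈ 𝒜 n := by
  classical
  set x := e.symm b with hx
  have hbx : e x = b := e.apply_symm_apply b
  have key : e ((DirectSum.decompose 𝒜 x n : B)) = b := by
    have hsum : (∑ m ∈ DFinsupp.support (DirectSum.decompose 𝒜 x),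
        e (DirectSum.decompose 𝒜 x m : B)) = b := by
      calc (∑ m ∈ DFinsupp.support (DirectSum.decompose 𝒜 x),
              e (DirectSum.decompose 𝒜 x m : B))
          = e (∑ m ∈ DFinsupp.support (DirectSum.decompose 𝒜 x),
              (DirectSum.decompose 𝒜 x m : B)) := (map_sum e _ _).symm
        _ = b := by rw [DirectSum.sum_support_decompose 𝒜 x, hbx]
    have hb' : (DirectSum.decompose 𝒜 b n : B) = b :=
      DirectSum.decompose_of_mem_same 𝒜 hb
    calc e ((DirectSum.decompose 𝒜 x n : B))
        = ∑ m ∈ DFinsupp.support (DirectSum.decompose 𝒜 x),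
            (DirectSum.decompose 𝒜 (e (DirectSum.decompose 𝒜 x m : B)) n : B) := by
          refine Eq.symm ((Finset.sum_eq_single n ?_ ?_).trans ?_)
          · intro m _ hmn
            exact DirectSum.decompose_of_mem_ne 𝒜
              (hdeg m _ (DirectSum.decompose 𝒜 x m).2) hmn
          · intro hn
            have hx0 : (DirectSum.decompose 𝒜 x n : B) = 0 := by
              rw [DFinsupp.notMem_support_iff.mp hn]; rfl
            rw [hx0, map_zero, DirectSum.decompose_zero]; rfl
          · exact DirectSum.decompose_of_mem_same 𝒜
              (hdeg n _ (DirectSum.decompose 𝒜 x n).2)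
      _ = (DirectSum.decompose 𝒜 (∑ m ∈ DFinsupp.support (DirectSum.decompose 𝒜 x),
            e (DirectSum.decompose 𝒜 x m : B)) n : B) := by
          rw [DirectSum.decompose_sum, DFinsupp.finset_sum_apply]
          push_cast
          rfl
      _ = b := by rw [hsum, hb']
  have hxn : x = (DirectSum.decompose 𝒜 x n : B) := by
    apply e.injective
    rw [hbx, key]
  rw [hxn]
  exact (DirectSum.decompose 𝒜 x n).2

omit [GradedRing 𝒜] in
lemma zhang_map_eq (e : B ≃ₗ[k] B) (hdeg : ∀ (n : ℤ) (b : B), b ∈ 𝒜 n → e b ∈ 𝒜 n)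
    (hdeg' : ∀ (n : ℤ) (b : B), b ∈ 𝒜 n → e.symm b ∈ 𝒜 n) (n : ℤ) :
    (𝒜 n).map (e.symm : B →ₗ[k] B) = 𝒜 n := by
  apply le_antisymm
  · rintro _ ⟨b, hb, rfl⟩
    exact hdeg' n b hb
  · intro b hb
    exact ⟨e b, hdeg n b hb, e.symm_apply_apply b⟩

end Aux

/-- Zhang twists have the same associated ℤ-algebra.  `B` is a ℤ-graded
`k`-algebra with grading `𝒜 : ℤ → Submodule k B`, and `τ = (τ_g)_{g ∈ ℤ}` is a Zhang
system: degree-preserving `k`-linear bijections with `τ_g(a · τ_h(b)) = τ_g(a) · τ_{g+h}(b)`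
for homogeneous `a ∈ B_h`.  The Zhang twist `B_τ` has twisted product `a ⋆ b = a · τ_g(b)`
for `a ∈ B_g`.  Claim: (1) the twisted product is associative on homogeneous elements
(so `B_τ` is an associative ℤ-graded algebra), and (2) the associated ℤ-algebras agree:
there are `k`-linear bijections `ψ_{ij} : B̌_{ij} = 𝒜_{j-i} → 𝒜_{j-i} = (B_τ)̌_{ij}`
carrying the product of `B̌` to the twisted product of `(B_τ)̌`. -/
theorem zhang_twist_has_isomorphic_Z_algebra
    (k : Type) [CommRing k] (B : Type) [Ring B] [Algebra k B]
    (𝒜 : ℤ → Submodule k B) [GradedRing 𝒜]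
    (τ : ℤ → (B ≃ₗ[k] B))
    (hτdeg : ∀ (g n : ℤ) (b : B), b ∈ 𝒜 n → τ g b ∈ 𝒜 n)
    (hZhang : ∀ (g h : ℤ) (a : B), a ∈ 𝒜 h → ∀ b : B,
      τ g (a * τ h b) = τ g a * τ (g + h) b) :
    -- (1) the twisted multiplication a ⋆ b = a * τ_g b is associative on homogeneous a, b
    (∀ (g h : ℤ) (a b c : B), a ∈ 𝒜 g → b ∈ 𝒜 h →
      (a * τ g b) * τ (g + h) c = a * τ g (b * τ h c)) ∧
    -- (2) the associated ℤ-algebras B̌ and (B_τ)̌ are isomorphic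
    (∃ ψ : ∀ i j : ℤ, (𝒜 (j - i)) ≃ₗ[k] (𝒜 (j - i)),
      ∀ (i j l : ℤ) (a : 𝒜 (j - i)) (b : 𝒜 (l - j)),
        -- ψ applied to the untwisted product a·b equals the twisted product
        -- ψ(a) ⋆ ψ(b) = ψ(a) * τ_{j-i}(ψ(b))
        ((ψ i l ⟨(a : B) * (b : B),
            (show (j - i) + (l - j) = l - i by ring) ▸
              SetLike.mul_mem_graded a.2 b.2⟩ : B)) =
          ((ψ i j a : B) * τ (j - i) (ψ j l b : B))) := by
  have hsymm : ∀ (g n : ℤ) (b : B), b ∈ 𝒜 n → (τ g).symm b ∈ 𝒜 n := fun g =>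
    zhang_symm_mem k B 𝒜 (τ g) (hτdeg g)
  constructor
  · intro g h a b c _ hb
    rw [hZhang g h b hb c, mul_assoc]
  · refine ⟨fun i j => (τ i).symm.ofSubmodules _ _
      (zhang_map_eq k B 𝒜 (τ i) (hτdeg i) (hsymm i) (j - i)), ?_⟩
    intro i j l a b
    rw [LinearEquiv.ofSubmodules_apply, LinearEquiv.ofSubmodules_apply,
      LinearEquiv.ofSubmodules_apply]
    apply (τ i).injective
    rw [hZhang i (j - i) _ (hsymm i (j - i) a a.2), (τ i).apply_symm_apply,
      (τ i).apply_symm_apply]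
    have : i + (j - i) = j := by ring
    rw [this, (τ j).apply_symm_apply]
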